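/- Let p be a prime and let A, B, C be integers with gcd(A,B) = 1 and C ≠ 0 such that A^4 + B^2 = C^p. Let q be a prime element of the Gaussian integers ℤ[i] which does not divide 2. Then p divides the multiplicity of q in (A² + iB)·(A² − iB)² (the multiplicity is finite since this Gaussian integer is nonzero). -/

import Mathlib

theorem p_dvd_multiplicity_of_odd_gaussian_prime
    (p : ℕ) (hp : p.Prime) (A B C : ℤ)
    (hcop : Int.gcd A B = 1) (hC : C ≠ 0)
    (heq : A ^ 4 + B ^ 2 = C ^ p)
    (q : GaussianInt) (hq : Prime q) (hq2 : ¬ q ∣ 2) :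
    p ∣ multiplicity q
      (((A : GaussianInt) ^ 2 + ⟨0, 1⟩ * B) *
        ((A : GaussianInt) ^ 2 - ⟨0, 1⟩ * B) ^ 2) := by
  set i : GaussianInt := ⟨0, 1⟩ with hi
  set u : GaussianInt := (A : GaussianInt) ^ 2 + i * B with hu
  set v : GaussianInt := (A : GaussianInt) ^ 2 - i * B with hv
  have hii : i * i = -1 := by decide
  have huv : u * v = (C : GaussianInt) ^ p := by
    have : u * v = (A : GaussianInt) ^ 4 - (i * i) * B ^ 2 := by rw [hu, hv]; ring
    rw [this, hii]
    have := congrArg (fun z : ℤ => (z : GaussianInt)) heq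
    push_cast at this
    linear_combination this
  have hCne : (C : GaussianInt) ≠ 0 := Int.cast_ne_zero.mpr hC
  have hCp : (C : GaussianInt) ^ p ≠ 0 := pow_ne_zero _ hCne
  have hune : u ≠ 0 := by
    intro h; rw [h, zero_mul] at huv; exact hCp huv.symm
  have hvne : v ≠ 0 := by
    intro h; rw [h, mul_zero] at huv; exact hCp huv.symm
  have fu : FiniteMultiplicity q u := FiniteMultiplicity.of_not_isUnit hq.not_isUnit hune
  have fv : FiniteMultiplicity q v := FiniteMultiplicity.of_not_isUnit hq.not_isUnit hvne
  have fC : FiniteMultiplicity q (C : GaussianInt) :=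
    FiniteMultiplicity.of_not_isUnit hq.not_isUnit hCne
  -- not both divisible
  have hnot : ¬ (q ∣ u ∧ q ∣ v) := by
    rintro ⟨hqu, hqv⟩
    have hA : q ∣ (A : GaussianInt) := by
      have h2A : q ∣ 2 * (A : GaussianInt) ^ 2 := by
        have : u + v = 2 * (A : GaussianInt) ^ 2 := by rw [hu, hv]; ring
        exact this ▸ dvd_add hqu hqv
      have := (hq.dvd_mul.mp h2A).resolve_left hq2
      exact hq.dvd_of_dvd_pow this
    have hB : q ∣ (B : GaussianInt) := by
      have h2B : q ∣ i * (2 * (B : GaussianInt)) := by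
        have : u - v = i * (2 * B) := by rw [hu, hv]; ring
        exact this ▸ dvd_sub hqu hqv
      have hiu : IsUnit i := by
        refine IsUnit.of_mul_eq_one (-i) ?_
        rw [mul_neg, hii]; ring
      have := (hq.dvd_mul.mp h2B).resolve_left (fun h => hq.not_unit (isUnit_of_dvd_unit h hiu))
      exact (hq.dvd_mul.mp this).resolve_left hq2
    obtain ⟨x, y, hxy⟩ : ∃ x y : ℤ, A * x + B * y = 1 :=
      ⟨A.gcdA B, A.gcdB B, by
        have := Int.gcd_eq_gcd_ab A B
        rw [hcop] at this
        exact_mod_cast this.symm⟩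
    have : q ∣ 1 := by
      have := congrArg (fun z : ℤ => (z : GaussianInt)) hxy
      push_cast at this
      calc q ∣ (A : GaussianInt) * x + B * y := dvd_add (hA.mul_right _) (hB.mul_right _)
        _ = 1 := this
    exact hq.not_unit (isUnit_of_dvd_one this)
  have hsum : multiplicity q u + multiplicity q v = p * multiplicity q (C : GaussianInt) := by
    rw [← multiplicity_mul hq (huv ▸ fC.pow hq), huv, fC.multiplicity_pow hq]
  have hmul : multiplicity q (u * v ^ 2) = multiplicity q u + 2 * multiplicity q v := by
    rw [multiplicity_mul hq (FiniteMultiplicity.of_not_isUnit hq.not_isUnit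
        (mul_ne_zero hune (pow_ne_zero _ hvne))), fv.multiplicity_pow hq]
  rw [hmul]
  rcases not_and_or.mp hnot with h | h
  · have : multiplicity q u = 0 := multiplicity_eq_zero.mpr h
    rw [this, zero_add]
    exact Dvd.dvd.mul_left ⟨multiplicity q (C : GaussianInt), by omega⟩ 2
  · have : multiplicity q v = 0 := multiplicity_eq_zero.mpr h
    rw [this, mul_zero, add_zero]
    exact ⟨multiplicity q (C : GaussianInt), by omega⟩
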